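/- Let R be a commutative unital ring, I an ideal of R, and M an R-module that is both injective and I-reduced. Then the ideal transform D_I(M) := colim_k Hom_R(I^k, M) (the direct limit over k ≥ 1 along the restriction maps induced by the inclusions I^{k+1} ⊆ I^k) is isomorphic to Hom_R(I, M); equivalently, D_I(M) ≅ M/(0 :_M I). -/

import Mathlib

/-!
STATEMENT 1: Let `R` be a commutative unital ring, `I` an ideal of `R`, and `M` an
`R`-module that is both injective and `I`-reduced. Then the ideal transform
`D_I(M) := colim_k Hom_R(I^k, M)` (direct limit over `k ≥ 1` along the restriction maps
induced by the inclusions `I^{k+1} ⊆ I^k`) is isomorphic to `Hom_R(I, M)`.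

The direct limit over `k ≥ 1` is indexed by `k : ℕ`, with the `k`-th term `Hom_R(I^(k+1), M)`.
-/

universe u

open Module

/-- The directed system `k ↦ Hom_R(I^(k+1), M)` with the restriction maps induced by
the inclusions `I^(l+1) ⊆ I^(k+1)` for `k ≤ l`. -/
noncomputable def homPowDiagram (R : Type u) [CommRing R] (I : Ideal R) (M : Type u)
    [AddCommGroup M] [Module R M] :
    ∀ k l : ℕ, k ≤ l → (↥(I ^ (k + 1)) →ₗ[R] M) →ₗ[R] (↥(I ^ (l + 1)) →ₗ[R] M) :=
  fun _ _ h =>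
    LinearMap.lcomp R M (Submodule.inclusion (Ideal.pow_le_pow_right (by omega)))

/-- The ideal transform `D_I(M) = colim_{k ≥ 1} Hom_R(I^k, M)`. -/
noncomputable abbrev idealTransform (R : Type u) [CommRing R] (I : Ideal R) (M : Type u)
    [AddCommGroup M] [Module R M] : Type u :=
  Module.DirectLimit (fun k : ℕ => ↥(I ^ (k + 1)) →ₗ[R] M) (homPowDiagram R I M)

section aux
variable (R : Type u) [CommRing R] (I : Ideal R) (M : Type u) [AddCommGroup M] [Module R M]

instance homPowDirected :
    DirectedSystem (fun k : ℕ => ↥(I ^ (k + 1)) →ₗ[R] M)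
      (fun i j h => homPowDiagram R I M i j h) where
  map_self := by
    intro i x
    ext y
    rfl
  map_map := by
    intro i j k hij hjk x
    ext y
    rfl

theorem reduced_pow (hred : ∀ m : M, (∀ r ∈ I ^ 2, r • m = 0) → ∀ r ∈ I, r • m = 0) :
    ∀ (k : ℕ) (m : M), (∀ r ∈ I ^ (k + 1), r • m = 0) → ∀ r ∈ I, r • m = 0 := by
  intro k
  induction k with
  | zero => intro m h r hr; exact h r (by simpa using hr)
  | succ k ih =>
    intro m h
    apply hred
    intro r hr
    rw [pow_two] at hr
    refine Submodule.mul_induction_on hr (fun a ha b hb => ?_)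
      (fun x y hx hy => by rw [add_smul, hx, hy, add_zero])
    rw [mul_smul]
    have hb' : ∀ s ∈ I ^ (k + 1), s • (b • m) = 0 := by
      intro s hs
      rw [smul_smul]
      apply h
      have : s * b ∈ I ^ (k + 1) * I := Ideal.mul_mem_mul hs hb
      rwa [← pow_succ] at this
    exact ih (b • m) hb' a ha

end aux

theorem stmt1 (R : Type u) [CommRing R] (I : Ideal R) (M : Type u) [AddCommGroup M]
    [Module R M] (hinj : Module.Injective R M)
    (hred : ∀ m : M, (∀ r ∈ I ^ 2, r • m = 0) → ∀ r ∈ I, r • m = 0) :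
    Nonempty (idealTransform R I M ≃ₗ[R] (↥I →ₗ[R] M)) := by
  set G := fun k : ℕ => ↥(I ^ (k + 1)) →ₗ[R] M with hG
  set f := homPowDiagram R I M with hf
  -- the structure map from level 0
  have hbij : Function.Bijective (Module.DirectLimit.of R ℕ G f 0) := by
    constructor
    · -- injectivity
      rw [injective_iff_map_eq_zero]
      intro g hg
      obtain ⟨k, hk, hzero⟩ := Module.DirectLimit.of.zero_exact hg
      -- g restricted to I^(k+1) is zero
      have hres : ∀ (x : R) (hx : x ∈ I ^ (k + 1)), g ⟨x, Ideal.pow_le_pow_right (by omega) hx⟩ = 0 := by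
        intro x hx
        have := congrArg (fun φ => φ ⟨x, hx⟩) hzero
        exact this
      -- extend g to R
      obtain ⟨F, hF⟩ := hinj.out (I ^ (0 + 1)).subtype (Submodule.injective_subtype _) g
      set m := F 1 with hm
      have hval : ∀ (x : R) (hx : x ∈ I ^ (0 + 1)), g ⟨x, hx⟩ = x • m := by
        intro x hx
        rw [← hF ⟨x, hx⟩]
        have : ((I ^ (0+1)).subtype ⟨x, hx⟩ : R) = x • (1 : R) := by simp
        rw [this, map_smul]
      have hpow : ∀ r ∈ I ^ (k + 1), r • m = 0 := by
        intro r hr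
        rw [← hval r (Ideal.pow_le_pow_right (by omega) hr)]
        exact hres r hr
      have hI : ∀ r ∈ I, r • m = 0 := reduced_pow R I M hred k m hpow
      ext ⟨x, hx⟩
      rw [hval x hx, hI x (by simpa using hx)]
      rfl
    · -- surjectivity
      intro z
      obtain ⟨i, x, rfl⟩ := Module.DirectLimit.exists_of z
      obtain ⟨y, hy⟩ := hinj.out
        (Submodule.inclusion (Ideal.pow_le_pow_right (by omega : 0 + 1 ≤ i + 1)))
        (Submodule.inclusion_injective _) x
      refine ⟨y, ?_⟩
      have : f 0 i (by omega) y = x := by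
        ext w
        exact hy w
      rw [← this, Module.DirectLimit.of_f]
  have e1 : (↥(I ^ (0 + 1)) →ₗ[R] M) ≃ₗ[R] (↥I →ₗ[R] M) :=
    LinearEquiv.arrowCongr
      (LinearEquiv.ofEq (I ^ (0 + 1)) I (by rw [pow_one])) (LinearEquiv.refl R M)
  exact ⟨(LinearEquiv.ofBijective _ hbij).symm.trans e1⟩
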